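/- For every natural number N ≥ 1 and |q|<1: (1/(q;q)_N) ∑_{n=1}^{N} q^n/(1-q^n)^2 = (1/(q;q)_N) ∑_{n=1}^{∞} n q^n (1-q^{Nn})/(1-q^n), i.e. ∑_{n=1}^{N} q^n/(1-q^n)^2 = ∑_{n=1}^{∞} n q^n (1-q^{Nn})/(1-q^n). -/

import Mathlib

set_option maxHeartbeats 800000


open Finset

/-- q-Pochhammer symbol (a;q)_n = ∏_{k=0}^{n-1} (1 - a q^k). -/
noncomputable def qP (a q : ℂ) (n : ℕ) : ℂ := ∏ k ∈ Finset.range n, (1 - a * q ^ k)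

/-- Gaussian (q-)binomial coefficient [N choose n]_q. -/
noncomputable def qBinom (q : ℂ) (N n : ℕ) : ℂ := qP q q N / (qP q q n * qP q q (N - n))

lemma aux_summable (x : ℂ) (hx : ‖x‖ < 1) :
    Summable (fun m : ℕ => ((m : ℂ) + 1) * x ^ (m + 1)) := by
  have h : Summable (fun n : ℕ => (n : ℂ) ^ 1 * x ^ n) :=
    summable_pow_mul_geometric_of_norm_lt_one 1 hx
  have h2 : Summable (fun m : ℕ => ((m + 1 : ℕ) : ℂ) ^ 1 * x ^ (m + 1)) :=
    (summable_nat_add_iff 1).2 h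
  simpa [pow_one] using h2

lemma aux_tsum (x : ℂ) (hx : ‖x‖ < 1) :
    ∑' m : ℕ, ((m : ℂ) + 1) * x ^ (m + 1) = x / (1 - x) ^ 2 := by
  have hf : Summable (fun n : ℕ => (n : ℂ) * x ^ n) := by
    have h : Summable (fun n : ℕ => (n : ℂ) ^ 1 * x ^ n) :=
      summable_pow_mul_geometric_of_norm_lt_one 1 hx
    simpa using h
  have h0 := Summable.tsum_eq_zero_add hf
  rw [← tsum_coe_mul_geometric_of_norm_lt_one hx, h0]
  push_cast
  simp

theorem stmt_8 (N : ℕ) (hN : 1 ≤ N) (q : ℂ) (hq : ‖q‖ < 1) :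
    ∑ n ∈ Finset.Icc 1 N, q ^ n / (1 - q ^ n) ^ 2 =
      ∑' n : ℕ, ((n : ℂ) + 1) * q ^ (n + 1) * (1 - q ^ (N * (n + 1))) / (1 - q ^ (n + 1)) := by
  have hqlt : ∀ k : ℕ, 1 ≤ k → ‖q ^ k‖ < 1 := by
    intro k hk
    rw [norm_pow]
    calc ‖q‖ ^ k ≤ ‖q‖ ^ 1 := pow_le_pow_of_le_one (norm_nonneg q) hq.le hk
    _ < 1 := by simpa using hq
  have hterm : ∀ n ∈ Finset.Icc 1 N,
      q ^ n / (1 - q ^ n) ^ 2 = ∑' m : ℕ, ((m : ℂ) + 1) * (q ^ n) ^ (m + 1) := by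
    intro n hn
    rw [aux_tsum _ (hqlt n (Finset.mem_Icc.1 hn).1)]
  rw [Finset.sum_congr rfl hterm]
  rw [← Summable.tsum_finsetSum (fun n hn => aux_summable _ (hqlt n (Finset.mem_Icc.1 hn).1))]
  refine tsum_congr fun m => ?_
  obtain ⟨x, hxdef⟩ : ∃ x, x = q ^ (m + 1) := ⟨_, rfl⟩
  have hx : ‖x‖ < 1 := hxdef ▸ hqlt (m + 1) (Nat.le_add_left 1 m)
  have hx1 : x ≠ 1 := fun h => by simp [h] at hx
  have hx1' : (1 : ℂ) - x ≠ 0 := sub_ne_zero.2 (Ne.symm hx1)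
  have hpow : ∀ n : ℕ, (q ^ n) ^ (m + 1) = x ^ n := by
    intro n
    rw [hxdef, ← pow_mul, ← pow_mul, Nat.mul_comm]
  simp_rw [hpow]
  have hsum : ∑ n ∈ Finset.Icc 1 N, x ^ n = x * ((x ^ N - 1) / (x - 1)) := by
    rw [← Finset.Ico_add_one_right_eq_Icc, Finset.sum_Ico_eq_sum_range]
    simp only [Nat.succ_sub_one, Nat.add_sub_cancel, pow_add, pow_one]
    rw [← Finset.mul_sum, geom_sum_eq hx1]
  rw [← Finset.mul_sum, hsum]
  have hxn : q ^ (N * (m + 1)) = x ^ N := by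
    rw [hxdef, ← pow_mul, Nat.mul_comm]
  rw [hxn, ← hxdef]
  have hx2 : x - 1 ≠ 0 := sub_ne_zero.2 hx1
  have key : (x ^ N - 1) / (x - 1) = (1 - x ^ N) / (1 - x) := by
    rw [div_eq_div_iff hx2 hx1']; ring
  rw [key]; ring
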